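/- Let (a_n)_{n ≥ 0} be non-negative reals and δ ∈ ℝ such that the series Σ_n a_n e^{-s n} converges for s > δ and diverges for s < δ, and assume Σ_n a_n e^{-δ n} < ∞. Then there exists a non-decreasing function h : [0,∞) → (0,∞) with the following two properties: (1) for every η > 0 there exist C_η > 0 and r_η > 0 such that h(t+r) ≤ C_η e^{η t} h(r) for all r ≥ r_η and t ≥ 0; (2) the modified series Σ_n h(n) a_n e^{-δ n} diverges (and consequently Σ_n h(n) a_n e^{-s n} still converges for all s > δ). -/

import Mathlib

/-- Patterson's trick: a slowly growing nondecreasing correction factor making the critical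
series divergent without changing the abscissa of convergence. -/
theorem stmt8 (a : ℕ → ℝ) (δ : ℝ) (ha : ∀ n, 0 ≤ a n)
    (hconv : ∀ s > δ, Summable (fun n : ℕ => a n * Real.exp (-s * (n : ℝ))))
    (hdiv : ∀ s < δ, ¬ Summable (fun n : ℕ => a n * Real.exp (-s * (n : ℝ))))
    (hcrit : Summable (fun n : ℕ => a n * Real.exp (-δ * (n : ℝ)))) :
    ∃ h : ℝ → ℝ, (∀ t ≥ (0:ℝ), 0 < h t) ∧ MonotoneOn h (Set.Ici 0) ∧
      (∀ η > (0:ℝ), ∃ Cη > (0:ℝ), ∃ rη > (0:ℝ), ∀ r ≥ rη, ∀ t ≥ (0:ℝ),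
        h (t + r) ≤ Cη * Real.exp (η * t) * h r) ∧
      ¬ Summable (fun n : ℕ => h (n : ℝ) * (a n * Real.exp (-δ * (n : ℝ)))) ∧
      (∀ s > δ, Summable (fun n : ℕ => h (n : ℝ) * (a n * Real.exp (-s * (n : ℝ))))) := by
  classical
  set b : ℕ → ℝ := fun n => a n * Real.exp (-δ * (n : ℝ)) with hb_def
  have hb0 : ∀ n, 0 ≤ b n := fun n => mul_nonneg (ha n) (Real.exp_pos _).le
  -- key step: for each slope 1/(k+1) and each start m, a block with weighted sum ≥ 1
  have key : ∀ (k m : ℕ), ∃ M : ℕ, m < M ∧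
      1 ≤ ∑ n ∈ Finset.Ico m M, b n * Real.exp ((n - m : ℝ) / ((k:ℝ)+1)) := by
    intro k m
    have hkpos : (0:ℝ) < (k:ℝ) + 1 := by positivity
    have hds : ¬ Summable (fun n : ℕ => b n * Real.exp ((n:ℝ) / ((k:ℝ)+1))) := by
      have h1 := hdiv (δ - 1/((k:ℝ)+1)) (by
        have : (0:ℝ) < 1/((k:ℝ)+1) := by positivity
        linarith)
      have heq : ∀ n : ℕ, a n * Real.exp (-(δ - 1/((k:ℝ)+1)) * (n:ℝ))
          = b n * Real.exp ((n:ℝ)/((k:ℝ)+1)) := by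
        intro n
        rw [hb_def]
        dsimp only
        rw [mul_assoc, ← Real.exp_add]
        congr 2
        ring
      intro hs
      exact h1 ((summable_congr heq).2 hs)
    have hnn : ∀ n, 0 ≤ b n * Real.exp ((n:ℝ) / ((k:ℝ)+1)) :=
      fun n => mul_nonneg (hb0 n) (Real.exp_pos _).le
    have htend := (not_summable_iff_tendsto_nat_atTop_of_nonneg hnn).1 hds
    have hev : ∀ᶠ M in Filter.atTop,
        (∑ n ∈ Finset.range m, b n * Real.exp ((n:ℝ) / ((k:ℝ)+1))) + Real.exp ((m:ℝ)/((k:ℝ)+1))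
          ≤ ∑ n ∈ Finset.range M, b n * Real.exp ((n:ℝ) / ((k:ℝ)+1)) :=
      htend.eventually_ge_atTop _
    obtain ⟨M, hM1, hM2⟩ := (hev.and (Filter.eventually_gt_atTop m)).exists
    refine ⟨M, hM2, ?_⟩
    have hsplit : ∑ n ∈ Finset.range m, b n * Real.exp ((n:ℝ) / ((k:ℝ)+1))
        + ∑ n ∈ Finset.Ico m M, b n * Real.exp ((n:ℝ) / ((k:ℝ)+1))
        = ∑ n ∈ Finset.range M, b n * Real.exp ((n:ℝ) / ((k:ℝ)+1)) := by
      rw [Finset.range_eq_Ico, Finset.range_eq_Ico]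
      exact Finset.sum_Ico_consecutive _ (Nat.zero_le m) hM2.le
    have hIco : Real.exp ((m:ℝ)/((k:ℝ)+1))
        ≤ ∑ n ∈ Finset.Ico m M, b n * Real.exp ((n:ℝ) / ((k:ℝ)+1)) := by linarith
    have hrw : ∀ n : ℕ, b n * Real.exp ((n - m : ℝ) / ((k:ℝ)+1))
        = Real.exp (-((m:ℝ)/((k:ℝ)+1))) * (b n * Real.exp ((n:ℝ) / ((k:ℝ)+1))) := by
      intro n
      have e : ((n:ℝ) - (m:ℝ))/((k:ℝ)+1) = -((m:ℝ)/((k:ℝ)+1)) + (n:ℝ)/((k:ℝ)+1) := by ring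
      rw [e, Real.exp_add]
      ring
    calc (1:ℝ) = Real.exp (-((m:ℝ)/((k:ℝ)+1))) * Real.exp ((m:ℝ)/((k:ℝ)+1)) := by
          rw [← Real.exp_add]; simp
      _ ≤ Real.exp (-((m:ℝ)/((k:ℝ)+1))) * ∑ n ∈ Finset.Ico m M, b n * Real.exp ((n:ℝ) / ((k:ℝ)+1)) := by
          apply mul_le_mul_of_nonneg_left hIco (Real.exp_pos _).le
      _ = _ := by rw [Finset.mul_sum]; exact (Finset.sum_congr rfl fun n _ => (hrw n).symm)
  choose F hFlt hFge using key
  set N : ℕ → ℕ := fun k => Nat.rec 0 (fun k ih => F k ih) k with hN_def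
  have hN0 : N 0 = 0 := rfl
  have hNsucc : ∀ k, N (k+1) = F k (N k) := fun k => rfl
  have hNlt : ∀ k, N k < N (k+1) := fun k => by rw [hNsucc]; exact hFlt k (N k)
  have hNmono : StrictMono N := strictMono_nat_of_lt_succ hNlt
  have hNk : ∀ k, k ≤ N k := fun k => hNmono.le_apply
  -- the piecewise-linear log of h
  set L : ℕ → ℝ → ℝ := fun k t => max 0 (min t ((N (k+1) : ℝ)) - (N k : ℝ)) with hL_def
  have hL0 : ∀ k t, 0 ≤ L k t := fun k t => le_max_left _ _
  have hLval : ∀ (k : ℕ) (t : ℝ), L k t = max 0 (min t ((N (k+1) : ℝ)) - (N k : ℝ)) :=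
    fun _ _ => rfl
  have hLvan : ∀ k (t : ℝ), t ≤ (N k : ℝ) → L k t = 0 := by
    intro k t ht
    apply max_eq_left
    have h1 : min t ((N (k+1) : ℝ)) ≤ t := min_le_left _ _
    linarith
  have hLmono : ∀ k, Monotone (L k) := by
    intro k t u htu
    rw [hLval, hLval]
    gcongr
  set g : ℝ → ℝ := fun t => ∑ k ∈ Finset.range ⌈t⌉₊, (1/((k:ℝ)+1)) * L k t with hg_def
  have hterm0 : ∀ (k : ℕ) (t : ℝ), 0 ≤ (1/((k:ℝ)+1)) * L k t :=
    fun k t => mul_nonneg (by positivity) (hL0 k t)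
  have hg_ext : ∀ (t : ℝ) (m : ℕ), ⌈t⌉₊ ≤ m →
      g t = ∑ k ∈ Finset.range m, (1/((k:ℝ)+1)) * L k t := by
    intro t m hm
    apply Finset.sum_subset (Finset.range_subset_range.2 hm)
    intro k _ hk
    have hk' : ⌈t⌉₊ ≤ k := le_of_not_gt fun hlt => hk (Finset.mem_range.2 hlt)
    have ht : t ≤ (N k : ℝ) := by
      calc t ≤ (⌈t⌉₊ : ℝ) := Nat.le_ceil t
        _ ≤ (k : ℝ) := by exact_mod_cast hk'
        _ ≤ (N k : ℝ) := by exact_mod_cast hNk k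
    rw [hLvan k t ht, mul_zero]
  have hg_nonneg : ∀ t, 0 ≤ g t := fun t => Finset.sum_nonneg fun k _ => hterm0 k t
  have hg_mono : Monotone g := by
    intro t u htu
    rw [hg_ext t (max ⌈t⌉₊ ⌈u⌉₊) (le_max_left _ _), hg_ext u (max ⌈t⌉₊ ⌈u⌉₊) (le_max_right _ _)]
    exact Finset.sum_le_sum fun k _ =>
      mul_le_mul_of_nonneg_left (hLmono k htu) (by positivity)
  -- telescoping
  have htel : ∀ (m : ℕ) (t : ℝ), 0 ≤ t → ∑ k ∈ Finset.range m, L k t = min t ((N m : ℝ)) := by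
    intro m
    induction m with
    | zero => intro t ht; simp [hN0, min_eq_right ht]
    | succ m ih =>
      intro t ht
      rw [Finset.sum_range_succ, ih t ht]
      have hcast : ((N m : ℝ)) ≤ ((N (m+1) : ℝ)) := by exact_mod_cast (hNlt m).le
      rcases le_total t ((N m : ℝ)) with h' | h'
      · rw [min_eq_left h', hLvan m t h', add_zero, min_eq_left (h'.trans hcast)]
      · rw [min_eq_right h', hLval]
        have h2 : (N m : ℝ) ≤ min t ((N (m+1) : ℝ)) := le_min h' hcast
        rw [max_eq_right (by linarith)]
        ring
  -- growth estimate
  have hgrow : ∀ η : ℝ, 0 < η → ∀ r t : ℝ, 0 ≤ t → (N ⌈1/η⌉₊ : ℝ) ≤ r → 0 ≤ r →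
      g (t + r) ≤ η * t + g r := by
    intro η hη r t ht hr hr0
    set K := ⌈1/η⌉₊ with hK_def
    have hηK : 1/((K:ℝ)+1) ≤ η := by
      rw [div_le_iff₀ (by positivity)]
      have h1 : 1/η ≤ (K : ℝ) := Nat.le_ceil _
      have h2 : 1/η ≤ (K:ℝ)+1 := by linarith
      calc (1:ℝ) = η * (1/η) := by field_simp
        _ ≤ η * ((K:ℝ)+1) := by nlinarith
    set m := max K (max ⌈t + r⌉₊ ⌈r⌉₊) with hm_def
    rw [hg_ext (t+r) m (le_trans (le_max_left _ _) (le_max_right _ _)),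
        hg_ext r m (le_trans (le_max_right _ _) (le_max_right _ _))]
    have hdnn : ∀ k, 0 ≤ L k (t+r) - L k r := fun k => by
      have := hLmono k (by linarith : r ≤ t + r); linarith
    have hdzero : ∀ k < K, L k (t+r) - L k r = 0 := by
      intro k hk
      have hNr : (N (k+1) : ℝ) ≤ r := by
        calc (N (k+1) : ℝ) ≤ (N K : ℝ) := by exact_mod_cast hNmono.monotone hk
          _ ≤ r := hr
      have e1 : L k r = (N (k+1) : ℝ) - (N k : ℝ) := by
        rw [hLval, min_eq_right hNr]
        exact max_eq_right (sub_nonneg.2 (by exact_mod_cast (hNlt k).le))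
      have e2 : L k (t+r) = (N (k+1) : ℝ) - (N k : ℝ) := by
        rw [hLval, min_eq_right (by linarith)]
        exact max_eq_right (sub_nonneg.2 (by exact_mod_cast (hNlt k).le))
      rw [e1, e2]; ring
    have hKm : K ≤ m := le_max_left _ _
    have hsum_d : ∑ k ∈ Finset.range m, (L k (t+r) - L k r) ≤ t := by
      rw [Finset.sum_sub_distrib, htel m (t+r) (by linarith), htel m r hr0]
      rcases le_total (t+r) ((N m : ℝ)) with h' | h'
      · rw [min_eq_left h', min_eq_left (by linarith)]; linarith
      · rw [min_eq_right h']
        rcases le_total r ((N m : ℝ)) with h'' | h''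
        · rw [min_eq_left h'']; linarith
        · rw [min_eq_right h'']; linarith
    have hmain : ∑ k ∈ Finset.range m, (1/((k:ℝ)+1)) * L k (t+r)
        - ∑ k ∈ Finset.range m, (1/((k:ℝ)+1)) * L k r ≤ η * t := by
      rw [← Finset.sum_sub_distrib]
      have step1 : ∀ k ∈ Finset.range m,
          (1/((k:ℝ)+1)) * L k (t+r) - (1/((k:ℝ)+1)) * L k r ≤ η * (L k (t+r) - L k r) := by
        intro k hk
        rw [← mul_sub]
        rcases lt_or_ge k K with hkK | hkK
        · rw [hdzero k hkK]; simp
        · apply mul_le_mul_of_nonneg_right _ (hdnn k)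
          calc 1/((k:ℝ)+1) ≤ 1/((K:ℝ)+1) := by
                apply one_div_le_one_div_of_le (by positivity)
                exact_mod_cast Nat.add_le_add_right hkK 1
            _ ≤ η := hηK
      calc ∑ k ∈ Finset.range m, ((1/((k:ℝ)+1)) * L k (t+r) - (1/((k:ℝ)+1)) * L k r)
          ≤ ∑ k ∈ Finset.range m, η * (L k (t+r) - L k r) := Finset.sum_le_sum step1
        _ = η * ∑ k ∈ Finset.range m, (L k (t+r) - L k r) := by rw [Finset.mul_sum]
        _ ≤ η * t := mul_le_mul_of_nonneg_left hsum_d hη.le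
    linarith
  -- block lower bound
  have hblock : ∀ j : ℕ, (1:ℝ) ≤ ∑ n ∈ Finset.Ico (N j) (N (j+1)), Real.exp (g (n:ℝ)) * b n := by
    intro j
    have h1 := hFge j (N j)
    rw [← hNsucc j] at h1
    refine le_trans h1 (Finset.sum_le_sum ?_)
    intro n hn
    rw [Finset.mem_Ico] at hn
    have hn1 : (N j : ℝ) ≤ (n : ℝ) := by exact_mod_cast hn.1
    have hn2 : (n : ℝ) ≤ (N (j+1) : ℝ) := by exact_mod_cast hn.2.le
    have hLj : L j (n:ℝ) = (n : ℝ) - (N j : ℝ) := by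
      rw [hLval, min_eq_left hn2]
      exact max_eq_right (by linarith)
    have hgn : ((n:ℝ) - (N j : ℝ)) / ((j:ℝ)+1) ≤ g (n:ℝ) := by
      rw [hg_ext (n:ℝ) (max (j+1) ⌈(n:ℝ)⌉₊) (le_max_right _ _)]
      have hjmem : j ∈ Finset.range (max (j+1) ⌈(n:ℝ)⌉₊) :=
        Finset.mem_range.2 (lt_of_lt_of_le (Nat.lt_succ_self j) (le_max_left _ _))
      have := Finset.single_le_sum (f := fun k : ℕ => (1/((k:ℝ)+1)) * L k (n:ℝ))
        (fun k _ => hterm0 k (n:ℝ)) hjmem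
      rw [hLj] at this
      calc ((n:ℝ) - (N j : ℝ)) / ((j:ℝ)+1) = (1/((j:ℝ)+1)) * ((n:ℝ) - (N j : ℝ)) := by ring
        _ ≤ _ := this
    calc b n * Real.exp (((n:ℝ) - (N j : ℝ)) / ((j:ℝ)+1))
        ≤ b n * Real.exp (g (n:ℝ)) :=
          mul_le_mul_of_nonneg_left (Real.exp_le_exp.2 hgn) (hb0 n)
      _ = Real.exp (g (n:ℝ)) * b n := mul_comm _ _
  -- partial sums unbounded
  have hpart : ∀ m : ℕ, (m : ℝ) ≤ ∑ n ∈ Finset.range (N m), Real.exp (g (n:ℝ)) * b n := by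
    intro m
    induction m with
    | zero => simp [hN0]
    | succ m ih =>
      have hsplit : ∑ n ∈ Finset.range (N m), Real.exp (g (n:ℝ)) * b n
          + ∑ n ∈ Finset.Ico (N m) (N (m+1)), Real.exp (g (n:ℝ)) * b n
          = ∑ n ∈ Finset.range (N (m+1)), Real.exp (g (n:ℝ)) * b n := by
        rw [Finset.range_eq_Ico, Finset.range_eq_Ico]
        exact Finset.sum_Ico_consecutive _ (Nat.zero_le _) (hNlt m).le
      have := hblock m
      push_cast
      linarith
  refine ⟨fun t => Real.exp (g t), fun t _ => Real.exp_pos _, ?_, ?_, ?_, ?_⟩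
  · intro t _ u _ htu
    exact Real.exp_le_exp.2 (hg_mono htu)
  · intro η hη
    refine ⟨1, one_pos, max ((N ⌈1/η⌉₊ : ℝ)) 1, lt_of_lt_of_le one_pos (le_max_right _ _), ?_⟩
    intro r hr t ht
    have hr1 : (N ⌈1/η⌉₊ : ℝ) ≤ r := le_trans (le_max_left _ _) hr
    have hr0 : (0:ℝ) ≤ r := le_trans (le_trans one_pos.le (le_max_right _ _)) hr
    have := hgrow η hη r t ht hr1 hr0
    rw [one_mul, ← Real.exp_add]
    exact Real.exp_le_exp.2 this
  · intro hs
    have hnn : ∀ n : ℕ, 0 ≤ Real.exp (g (n:ℝ)) * (a n * Real.exp (-δ * (n:ℝ))) :=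
      fun n => mul_nonneg (Real.exp_pos _).le (hb0 n)
    set S := ∑' n : ℕ, Real.exp (g (n:ℝ)) * (a n * Real.exp (-δ * (n:ℝ))) with hS_def
    have hub : ∀ m : ℕ, (m : ℝ) ≤ S := by
      intro m
      refine le_trans (hpart m) (hs.sum_le_tsum _ (fun i _ => hnn i))
    have := hub (⌈S⌉₊ + 1)
    have hS : S ≤ (⌈S⌉₊ : ℝ) := Nat.le_ceil S
    push_cast at this
    linarith
  · intro s hs
    set η := (s - δ)/2 with hη_def
    have hηpos : 0 < η := by rw [hη_def]; linarith
    set K := ⌈1/η⌉₊ with hK_def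
    have hbound : ∀ n : ℕ, g (n:ℝ) ≤ η * (n:ℝ) + g ((N K : ℝ)) := by
      intro n
      rcases le_total ((n:ℝ)) ((N K : ℝ)) with h' | h'
      · have := hg_mono h'
        have hn0 : (0:ℝ) ≤ η * (n:ℝ) := mul_nonneg hηpos.le (Nat.cast_nonneg n)
        linarith
      · have h1 := hgrow η hηpos ((N K : ℝ)) ((n:ℝ) - (N K : ℝ)) (by linarith) le_rfl (by positivity)
        rw [sub_add_cancel] at h1
        have h2 : η * ((n:ℝ) - (N K : ℝ)) ≤ η * (n:ℝ) := by
          apply mul_le_mul_of_nonneg_left _ hηpos.le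
          have : (0:ℝ) ≤ (N K : ℝ) := by positivity
          linarith
        linarith
    refine Summable.of_nonneg_of_le
      (f := fun n : ℕ => Real.exp (g ((N K : ℝ))) * (a n * Real.exp (-(δ + η) * (n:ℝ))))
      (fun n => mul_nonneg (Real.exp_pos _).le (mul_nonneg (ha n) (Real.exp_pos _).le))
      ?_ ((hconv (δ + η) (by linarith)).mul_left _)
    · intro n
      dsimp only
      have e1 : Real.exp (g (n:ℝ)) * (a n * Real.exp (-s * (n:ℝ)))
          = a n * (Real.exp (g (n:ℝ)) * Real.exp (-s * (n:ℝ))) := by ring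
      have e2 : Real.exp (g ((N K : ℝ))) * (a n * Real.exp (-(δ + η) * (n:ℝ)))
          = a n * (Real.exp (g ((N K : ℝ))) * Real.exp (-(δ + η) * (n:ℝ))) := by ring
      rw [e1, e2]
      apply mul_le_mul_of_nonneg_left _ (ha n)
      rw [← Real.exp_add, ← Real.exp_add]
      apply Real.exp_le_exp.2
      have h3 := hbound n
      have hs2 : -(δ + η) * (n:ℝ) = η * (n:ℝ) + -s * (n:ℝ) := by
        rw [hη_def]; ring
      linarith
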